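/- Let P be a valid placement of an ab×ab Sudoku grid with a×b blocks, contained in a set S of cells, and for 0 ≤ i ≤ ab let M_i be the b×a 0–1 matrix recording which rows of the grid are covered by cells of P lying in the first i columns. Then each M_i is almost-balanced: every row of M_i has either ⌊i/b⌋ or ⌈i/b⌉ nonzeros. -/

import Mathlib

/-- Number of nonzero (true) entries in row `i` of a 0-1 matrix. -/
def rowCount {a b : ℕ} (M : Fin a → Fin b → Bool) (i : Fin a) : ℕ :=
  (Finset.univ.filter (fun j => M i j = true)).card

/-- A 0-1 matrix is almost balanced if every two rows have numbers of
nonzeros differing by at most one. -/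
def AlmostBalanced {a b : ℕ} (M : Fin a → Fin b → Bool) : Prop :=
  ∀ i i' : Fin a, rowCount M i ≤ rowCount M i' + 1
/-- Total number of ones ("count") of a 0-1 matrix. -/
def mcount {a b : ℕ} (M : Fin b → Fin a → Bool) : ℕ :=
  (Finset.univ.filter (fun p : Fin b × Fin a => M p.1 p.2 = true)).card

/-- Grid row corresponding to matrix coefficient `(j, k)`: the `k`-th row in
the `j`-th group of `a` consecutive grid rows. -/
def rowIdx (a b : ℕ) (j : Fin b) (k : Fin a) : Fin (a*b) :=
  ⟨j.val * a + k.val, by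
    have hj := j.isLt; have hk := k.isLt
    have h1 : j.val * a + k.val < (j.val + 1) * a := by
      have : (j.val + 1) * a = j.val * a + a := by ring
      omega
    have h2 : (j.val + 1) * a ≤ b * a := Nat.mul_le_mul_right a hj
    have h3 : a * b = b * a := Nat.mul_comm a b
    omega⟩

/-- Arcs of the graph `G_S` on almost-balanced `b × a` 0-1 matrices: `B` differs
from `A` only by changing coefficient `(j,k)` (grid row `rowIdx a b j k`) from 0
to 1, the count of `B` equals the (1-indexed) column `c.val + 1`, and the cell
`(rowIdx a b j k, c)` belongs to `S`. -/
def GEdge (a b : ℕ) (S : Finset (Fin (a*b) × Fin (a*b)))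
    (A B : Fin b → Fin a → Bool) : Prop :=
  AlmostBalanced A ∧ AlmostBalanced B ∧
  ∃ (j : Fin b) (k : Fin a) (c : Fin (a*b)),
    A j k = false ∧ B j k = true ∧
    (∀ (j' : Fin b) (k' : Fin a), (j', k') ≠ (j, k) → A j' k' = B j' k') ∧
    mcount B = c.val + 1 ∧ (rowIdx a b j k, c) ∈ S
/-- A valid placement on the `ab × ab` Sudoku grid with `a × b` blocks:
exactly one cell in each row, each column, and each block. -/
def IsValidPlacement (a b : ℕ) (P : Finset (Fin (a*b) × Fin (a*b))) : Prop :=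
  (∀ r : Fin (a*b), (P.filter (fun p => p.1 = r)).card = 1) ∧
  (∀ c : Fin (a*b), (P.filter (fun p => p.2 = c)).card = 1) ∧
  (∀ (i : Fin b) (j : Fin a),
    (P.filter (fun p => p.1.val / a = i.val ∧ p.2.val / b = j.val)).card = 1)
/-- `stepMatrix a b P i` records which grid rows are covered by cells of `P`
lying in the first `i` columns, as a `b × a` 0-1 matrix. -/
def stepMatrix (a b : ℕ) (P : Finset (Fin (a*b) × Fin (a*b))) (i : ℕ) :
    Fin b → Fin a → Bool :=
  fun j k => decide (∃ p ∈ P, p.1 = rowIdx a b j k ∧ p.2.val < i)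

theorem stepMatrix_almost_balanced (a b : ℕ) (ha : 0 < a) (hb : 0 < b)
    (S : Set (Fin (a*b) × Fin (a*b))) (P : Finset (Fin (a*b) × Fin (a*b)))
    (hP : IsValidPlacement a b P) (hPS : ∀ p ∈ P, p ∈ S) :
    ∀ i : ℕ, i ≤ a * b → ∀ j : Fin b,
      rowCount (stepMatrix a b P i) j = i / b ∨
      rowCount (stepMatrix a b P i) j = (i + b - 1) / b := by
  intro i hi j
  classical
  set T := P.filter (fun p => p.1.val / a = j.val ∧ p.2.val < i) with hT
  -- Step 1: rowCount equals the number of cells of P in row group j with col < i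
  have h1 : rowCount (stepMatrix a b P i) j = T.card := by
    symm
    apply Finset.card_bij (fun p _ => (⟨p.1.val % a, Nat.mod_lt _ ha⟩ : Fin a))
    · intro p hp
      simp only [hT, Finset.mem_filter] at hp
      obtain ⟨hpP, hdiv, hlt⟩ := hp
      simp only [rowCount, Finset.mem_filter, Finset.mem_univ, true_and, stepMatrix,
        decide_eq_true_eq]
      refine ⟨p, hpP, ?_, hlt⟩
      apply Fin.ext
      simp only [rowIdx]
      have h := Nat.div_add_mod p.1.val a
      rw [hdiv, Nat.mul_comm] at h
      exact h.symm
    · intro p hp p' hp' heq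
      simp only [hT, Finset.mem_filter] at hp hp'
      have hv : p.1.val % a = p'.1.val % a := congrArg Fin.val heq
      have h := Nat.div_add_mod p.1.val a
      have h' := Nat.div_add_mod p'.1.val a
      rw [hp.2.1] at h
      rw [hp'.2.1] at h'
      have hrow : p.1 = p'.1 := Fin.ext (by omega)
      have hcard := hP.1 p.1
      have hone : ∀ x ∈ P.filter (fun q => q.1 = p.1), ∀ y ∈ P.filter (fun q => q.1 = p.1),
          x = y := Finset.card_le_one.mp (le_of_eq hcard)
      exact hone p (Finset.mem_filter.mpr ⟨hp.1, rfl⟩)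
        p' (Finset.mem_filter.mpr ⟨hp'.1, hrow.symm⟩)
    · intro k hk
      simp only [rowCount, Finset.mem_filter, Finset.mem_univ, true_and, stepMatrix,
        decide_eq_true_eq] at hk
      obtain ⟨p, hpP, hrow, hlt⟩ := hk
      have hval : p.1.val = j.val * a + k.val := congrArg Fin.val hrow
      have hdiv : p.1.val / a = j.val := by
        rw [hval, Nat.mul_comm, Nat.mul_add_div ha, Nat.div_eq_of_lt k.isLt, Nat.add_zero]
      refine ⟨p, Finset.mem_filter.mpr ⟨hpP, hdiv, hlt⟩, ?_⟩
      apply Fin.ext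
      simp only [hval, Nat.mul_comm j.val a, Nat.mul_add_mod]
      exact Nat.mod_eq_of_lt k.isLt
  -- Step 2: count T fiberwise over column bands
  have h2 : T.card = ∑ m ∈ Finset.range a, (T.filter (fun p => p.2.val / b = m)).card := by
    apply Finset.card_eq_sum_card_fiberwise
    intro p _
    have : p.2.val < a * b := p.2.isLt
    exact Finset.mem_range.mpr ((Nat.div_lt_iff_lt_mul hb).mpr (by omega))
  set c := fun m => (T.filter (fun p => p.2.val / b = m)).card with hc
  -- block cardinality facts
  have hblock : ∀ m : ℕ, m < a →
      (P.filter (fun p => p.1.val / a = j.val ∧ p.2.val / b = m)).card = 1 := by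
    intro m hm
    exact hP.2.2 j ⟨m, hm⟩
  -- upper bound on fibers
  have hub : ∀ m ∈ Finset.range a, c m ≤ if m * b < i then 1 else 0 := by
    intro m hm
    rw [Finset.mem_range] at hm
    by_cases hmb : m * b < i
    · rw [if_pos hmb]
      rw [← hblock m hm]
      apply Finset.card_le_card
      intro p hp
      simp only [hT, Finset.mem_filter] at hp ⊢
      exact ⟨hp.1.1, hp.1.2.1, hp.2⟩
    · rw [if_neg hmb]
      have : T.filter (fun p => p.2.val / b = m) = ∅ := by
        apply Finset.filter_eq_empty_iff.mpr
        intro p hp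
        simp only [hT, Finset.mem_filter] at hp
        intro hdm
        have := Nat.div_mul_le_self p.2.val b
        rw [hdm] at this
        omega
      simp [hc, this]
  -- lower bound on fibers
  have hlb : ∀ m ∈ Finset.range (i / b), 1 ≤ c m := by
    intro m hm
    rw [Finset.mem_range] at hm
    have hmb : (m + 1) * b ≤ i := (Nat.le_div_iff_mul_le hb).mp hm
    have hma : m < a := by
      have h1 : i / b ≤ a * b / b := Nat.div_le_div_right hi
      rw [Nat.mul_div_cancel a hb] at h1
      omega
    rw [← hblock m hma]
    apply Finset.card_le_card
    intro p hp
    simp only [hT, Finset.mem_filter] at hp ⊢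
    have hlt : p.2.val < (m + 1) * b := by
      have h2 : p.2.val / b < m + 1 := by omega
      exact (Nat.div_lt_iff_lt_mul hb).mp h2
    exact ⟨⟨hp.1, hp.2.1, by omega⟩, hp.2.2⟩
  -- lower bound: i / b ≤ count
  have hdivle : i / b ≤ a := by
    have h1 : i / b ≤ a * b / b := Nat.div_le_div_right hi
    rw [Nat.mul_div_cancel a hb] at h1
    exact h1
  have hlow : i / b ≤ T.card := by
    rw [h2]
    calc i / b = ∑ _m ∈ Finset.range (i / b), 1 := by simp
      _ ≤ ∑ m ∈ Finset.range (i / b), c m := Finset.sum_le_sum hlb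
      _ ≤ ∑ m ∈ Finset.range a, c m :=
          Finset.sum_le_sum_of_subset (Finset.range_subset_range.mpr hdivle)
  -- upper bound: count ≤ ceil
  have hhigh : T.card ≤ (i + b - 1) / b := by
    rw [h2]
    calc ∑ m ∈ Finset.range a, c m
        ≤ ∑ m ∈ Finset.range a, (if m * b < i then 1 else 0) := Finset.sum_le_sum hub
      _ = ((Finset.range a).filter (fun m => m * b < i)).card :=
          (Finset.card_filter _ _).symm
      _ ≤ (Finset.range ((i + b - 1) / b)).card := by
          apply Finset.card_le_card
          intro m hm
          simp only [Finset.mem_filter, Finset.mem_range] at hm ⊢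
          have hle : m + 1 ≤ (i + b - 1) / b := by
            rw [Nat.le_div_iff_mul_le hb]
            have h3 : m * b < i := hm.2
            have h4 : (m + 1) * b = m * b + b := by ring
            omega
          omega
      _ = (i + b - 1) / b := Finset.card_range _
  -- ceil ≤ floor + 1
  have hceil : (i + b - 1) / b ≤ i / b + 1 := by
    have h1 : (i + b - 1) / b ≤ (i + b) / b := Nat.div_le_div_right (by omega)
    rw [Nat.add_div_right i hb] at h1
    exact h1
  rw [h1]
  omega
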